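/- The infinite Fibonacci word u is not eventually periodic; equivalently, there is no nonempty finite word x with u = x^ω (infinite repetition of x). -/

import Mathlib

def rho (w : List Bool) : List Bool := w.flatMap (fun c => if c then [true, false] else [true])

def ufib : ℕ → List Bool
  | 0 => [true]
  | n + 1 => rho (ufib n)

def uinf (n : ℕ) : Bool := (ufib n).getD n true

lemma rho_append (u v : List Bool) : rho (u ++ v) = rho u ++ rho v := by
  simp [rho]

lemma ufib_add_two (n : ℕ) : ufib (n + 2) = ufib (n + 1) ++ ufib n := by
  induction n with
  | zero => decide
  | succ n ih =>
    have h : ufib (n + 3) = rho (ufib (n + 1) ++ ufib n) := by rw [← ih]; rfl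
    rw [h, rho_append]; rfl

lemma ufib_prefix_succ (n : ℕ) : ufib n <+: ufib (n + 1) := by
  cases n with
  | zero => exact ⟨[false], rfl⟩
  | succ n => rw [ufib_add_two]; exact List.prefix_append _ _

lemma ufib_prefix {m n : ℕ} (h : m ≤ n) : ufib m <+: ufib n := by
  induction n with
  | zero => simp_all
  | succ n ih =>
    rcases Nat.lt_or_ge m (n+1) with h' | h'
    · exact (ih (Nat.lt_succ_iff.mp h')).trans (ufib_prefix_succ n)
    · have : m = n + 1 := le_antisymm h h'
      simp [this]

lemma ufib_length (n : ℕ) : (ufib n).length = Nat.fib (n + 2) := by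
  induction n using Nat.strong_induction_on with
  | _ n ih =>
    match n with
    | 0 => decide
    | 1 => decide
    | (m+2) =>
      have e1 : m+1+2 = m+3 := rfl
      have e2 : m+2+2 = m+4 := rfl
      have e3 : Nat.fib (m+4) = Nat.fib (m+2) + Nat.fib (m+3) := Nat.fib_add_two
      rw [ufib_add_two, List.length_append, ih (m+1) (by omega), ih m (by omega), e1, e2, e3]
      omega

lemma ufib_count (n : ℕ) : (ufib n).count true = Nat.fib (n + 1) := by
  induction n using Nat.strong_induction_on with
  | _ n ih =>
    match n with
    | 0 => decide
    | 1 => decide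
    | (m+2) =>
      have e1 : m+1+1 = m+2 := rfl
      have e2 : m+2+1 = m+3 := rfl
      have e3 : Nat.fib (m+3) = Nat.fib (m+1) + Nat.fib (m+2) := Nat.fib_add_two
      rw [ufib_add_two, List.count_append, ih (m+1) (by omega), ih m (by omega), e1, e2, e3]
      omega

lemma succ_le_fib (n : ℕ) : n + 1 ≤ Nat.fib (n + 2) := by
  induction n with
  | zero => decide
  | succ n ih =>
    have h1 : 1 ≤ Nat.fib (n + 1) := Nat.fib_pos.mpr (by omega)
    have e3 : Nat.fib (n + 3) = Nat.fib (n + 1) + Nat.fib (n + 2) := Nat.fib_add_two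
    show n + 2 ≤ Nat.fib (n + 3)
    omega

lemma uinf_eq {n i : ℕ} (h : i < Nat.fib (n + 2)) : uinf i = (ufib n).getD i true := by
  have hi : i < (ufib i).length := by rw [ufib_length]; exact lt_of_lt_of_le (Nat.lt_succ_self i) (succ_le_fib i)
  have hn : i < (ufib n).length := by rw [ufib_length]; exact h
  set m := max i n with hm
  have him : i < (ufib m).length := by
    rw [ufib_length]; calc i < Nat.fib (i+2) := hi.trans_eq (ufib_length i)
    _ ≤ Nat.fib (m+2) := Nat.fib_mono (by omega)
  rw [uinf, List.getD_eq_getElem _ _ hi, List.getD_eq_getElem _ _ hn,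
    (ufib_prefix (le_max_left i n)).getElem hi, (ufib_prefix (le_max_right i n)).getElem hn]

/-- number of `true`s among `u 0 .. u (L-1)` -/
def cnt (u : ℕ → Bool) (L : ℕ) : ℕ := (List.range L).countP u

lemma cnt_add (u : ℕ → Bool) (a b : ℕ) :
    cnt u (a + b) = cnt u a + (List.range b).countP (fun j => u (a + j)) := by
  rw [cnt, List.range_add, List.countP_append, List.countP_map]
  rfl

lemma cnt_le_add (u : ℕ → Bool) (a b : ℕ) : cnt u (a + b) ≤ cnt u a + b := by
  rw [cnt_add]
  have h : (List.range b).countP (fun j => u (a + j)) ≤ b := by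
    simpa using List.countP_le_length (p := fun j => u (a + j)) (l := List.range b)
  omega

lemma cnt_mono (u : ℕ → Bool) (a b : ℕ) : cnt u a ≤ cnt u (a + b) := by
  rw [cnt_add]; omega

lemma ufib_eq_map (n : ℕ) : ufib n = (List.range (Nat.fib (n + 2))).map uinf := by
  apply List.ext_getElem
  · simp [ufib_length]
  · intro i h1 h2
    have hi : i < Nat.fib (n + 2) := by simpa [ufib_length] using h1
    have := uinf_eq (n := n) hi
    rw [List.getD_eq_getElem _ _ h1] at this
    simp [← this]

lemma cnt_fib (n : ℕ) : cnt uinf (Nat.fib (n + 2)) = Nat.fib (n + 1) := by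
  have h := ufib_count n
  rw [ufib_eq_map n, List.count_eq_countP, List.countP_map] at h
  rw [← h, cnt]
  congr 1
  funext i
  simp

section Growth

open Int

lemma fib_grow_base (a b : ℤ) (ha : 0 ≤ a) (hb : 0 ≤ b) (hab : 0 < a + b) (C : ℤ) :
    ∃ m : ℕ, C < |(Nat.fib m : ℤ) * a + (Nat.fib (m + 1) : ℤ) * b| := by
  set M := max 5 (C.toNat + 5) with hM
  have h5 : 5 ≤ M := le_max_left _ _
  have h1 : M ≤ Nat.fib M := Nat.le_fib_self h5
  have hC : C < (M : ℤ) := by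
    have := Int.self_le_toNat C
    have := le_max_right 5 (C.toNat + 5)
    push_cast
    omega
  have hCf : C < (Nat.fib M : ℤ) := lt_of_lt_of_le hC (by exact_mod_cast h1)
  have hfpos : (5 : ℤ) ≤ (Nat.fib M : ℤ) := by exact_mod_cast le_trans h5 h1
  refine ⟨M, ?_⟩
  have hmono : (Nat.fib M : ℤ) ≤ (Nat.fib (M + 1) : ℤ) := by exact_mod_cast Nat.fib_le_fib_succ
  have h0 : 0 ≤ (Nat.fib M : ℤ) * a + (Nat.fib (M + 1) : ℤ) * b := by positivity
  rw [abs_of_nonneg h0]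
  have key : (Nat.fib M : ℤ) * (a + b) ≤ (Nat.fib M : ℤ) * a + (Nat.fib (M + 1) : ℤ) * b := by
    nlinarith
  have key2 : (Nat.fib M : ℤ) ≤ (Nat.fib M : ℤ) * (a + b) :=
    le_mul_of_one_le_right (by positivity) (by omega)
  linarith

lemma fib_shift (a b : ℤ) (m : ℕ) :
    (Nat.fib m : ℤ) * b + (Nat.fib (m + 1) : ℤ) * (a + b)
      = (Nat.fib (m + 1) : ℤ) * a + (Nat.fib (m + 2) : ℤ) * b := by
  have : (Nat.fib (m + 2) : ℤ) = Nat.fib m + Nat.fib (m + 1) := by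
    exact_mod_cast Nat.fib_add_two
  rw [this]; ring

lemma fib_grow : ∀ s : ℕ, ∀ a b : ℤ, a.natAbs + b.natAbs ≤ s → (a ≠ 0 ∨ b ≠ 0) → ∀ C : ℤ,
    ∃ m : ℕ, C < |(Nat.fib m : ℤ) * a + (Nat.fib (m + 1) : ℤ) * b| := by
  intro s
  induction s with
  | zero => intro a b hs hab C; omega
  | succ s ih =>
    intro a b hs hab C
    rcases le_or_gt 0 a with ha | ha
    · rcases le_or_gt 0 b with hb | hb
      · exact fib_grow_base a b ha hb (by omega) C
      · -- a ≥ 0, b < 0 : mixed (a > 0 since a=0,b<0 still mixed? a=0,b<0: both ≤ 0 case)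
        rcases le_or_gt (a + b) 0 with hab2 | hab2
        · -- pair (b, a+b) both ≤ 0, use base on negation, then shift
          obtain ⟨m, hm⟩ := fib_grow_base (-b) (-(a + b)) (by omega) (by omega) (by omega) C
          refine ⟨m + 1, ?_⟩
          rw [← fib_shift]
          calc C < |(Nat.fib m : ℤ) * (-b) + (Nat.fib (m + 1) : ℤ) * (-(a + b))| := hm
          _ = |(Nat.fib m : ℤ) * b + (Nat.fib (m + 1) : ℤ) * (a + b)| := by
              rw [← abs_neg]; ring_nf
        · -- pair (b, a+b) mixed, measure decreases: |b| + |a+b| = -b + a + b = a < a + (-b)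
          obtain ⟨m, hm⟩ := ih b (a + b) (by omega) (by omega) C
          exact ⟨m + 1, by rwa [← fib_shift]⟩
    · rcases le_or_gt b 0 with hb | hb
      · -- both ≤ 0 (a < 0)
        obtain ⟨m, hm⟩ := fib_grow_base (-a) (-b) (by omega) (by omega) (by omega) C
        refine ⟨m, ?_⟩
        calc C < |(Nat.fib m : ℤ) * (-a) + (Nat.fib (m + 1) : ℤ) * (-b)| := hm
        _ = |(Nat.fib m : ℤ) * a + (Nat.fib (m + 1) : ℤ) * b| := by rw [← abs_neg]; ring_nf
      · -- a < 0, b > 0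
        rcases le_or_gt 0 (a + b) with hab2 | hab2
        · obtain ⟨m, hm⟩ := fib_grow_base b (a + b) (by omega) hab2 (by omega) C
          exact ⟨m + 1, by rwa [← fib_shift] ⟩
        · obtain ⟨m, hm⟩ := ih b (a + b) (by omega) (by omega) C
          exact ⟨m + 1, by rwa [← fib_shift]⟩

end Growth

/-- The infinite Fibonacci word is not eventually periodic (in particular it is not of the
form x^ω for a nonempty finite word x). -/
theorem fib_word_not_eventually_periodic :
    ¬ ∃ p : ℕ, 0 < p ∧ ∃ N : ℕ, ∀ n ≥ N, uinf (n + p) = uinf n := by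
  rintro ⟨p, hp, N, hper⟩
  -- the number of `true`s in the window `[N, N+p)`
  set k : ℕ := (List.range p).countP (fun j => uinf (N + j)) with hk
  have hkp : k ≤ p := by
    have := List.countP_le_length (p := fun j => uinf (N + j)) (l := List.range p)
    simpa [hk] using this
  -- periodicity shifted by multiples of p
  have hshift : ∀ m j, uinf (N + m * p + j) = uinf (N + j) := by
    intro m
    induction m with
    | zero => simp
    | succ m ih =>
      intro j
      have e : N + (m + 1) * p + j = (N + m * p + j) + p := by ring
      rw [e, hper (N + m * p + j) (by omega), ih j]
  -- counts along the arithmetic progression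
  have hcnt : ∀ m, cnt uinf (N + m * p) = cnt uinf N + m * k := by
    intro m
    induction m with
    | zero => simp
    | succ m ih =>
      have e : N + (m + 1) * p = (N + m * p) + p := by ring
      rw [e, cnt_add, ih]
      have hw : (List.range p).countP (fun j => uinf (N + m * p + j))
          = (List.range p).countP (fun j => uinf (N + j)) := by
        apply List.countP_congr
        intro j _
        rw [hshift m j]
      rw [hw, ← hk]
      ring
  set cN : ℕ := cnt uinf N with hcN
  set B : ℤ := p * cN + p * p + p * N + p * p with hB
  -- the key boundedness estimate
  have hbound : ∀ n, N ≤ n →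
      |(p : ℤ) * Nat.fib (n + 1) - (k : ℤ) * Nat.fib (n + 2)| ≤ B := by
    intro n hn
    have hLN : N ≤ Nat.fib (n + 2) := le_trans (by omega) (succ_le_fib n)
    set D := Nat.fib (n + 2) - N with hD
    have hdm := Nat.div_add_mod D p
    set m := D / p with hm
    set r := D % p with hr
    have hrp : r < p := Nat.mod_lt _ hp
    have hmp : m * p = p * m := Nat.mul_comm m p
    have hfib2 : Nat.fib (n + 2) = (N + m * p) + r := by omega
    have h1 : cnt uinf (N + m * p) = cN + m * k := hcnt m
    have h2 : cnt uinf (N + m * p) ≤ Nat.fib (n + 1) := by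
      rw [← cnt_fib n, hfib2]; exact cnt_mono uinf _ r
    have h3 : Nat.fib (n + 1) ≤ cnt uinf (N + m * p) + r := by
      rw [← cnt_fib n, hfib2]; exact cnt_le_add uinf _ r
    -- pass to ℤ
    have hub : (Nat.fib (n + 1) : ℤ) ≤ (cN : ℤ) + m * k + r := by exact_mod_cast h1 ▸ h3
    have hlb : (cN : ℤ) + m * k ≤ (Nat.fib (n + 1) : ℤ) := by exact_mod_cast h1 ▸ h2
    have hfib2' : (Nat.fib (n + 2) : ℤ) = (N : ℤ) + m * p + r := by exact_mod_cast hfib2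
    have hp' : (0 : ℤ) < p := by exact_mod_cast hp
    have hkp' : (k : ℤ) ≤ p := by exact_mod_cast hkp
    have hrp' : (r : ℤ) < p := by exact_mod_cast hrp
    have hcN0 : (0 : ℤ) ≤ cN := by positivity
    have hN0 : (0 : ℤ) ≤ N := by positivity
    have hk0 : (0 : ℤ) ≤ k := by positivity
    have hr0 : (0 : ℤ) ≤ r := by positivity
    have hm0 : (0 : ℤ) ≤ m := by positivity
    have H1 : (p : ℤ) * Nat.fib (n + 1) ≤ p * ((cN : ℤ) + m * k + r) :=
      mul_le_mul_of_nonneg_left hub (by positivity)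
    have H2 : (p : ℤ) * ((cN : ℤ) + m * k) ≤ p * Nat.fib (n + 1) :=
      mul_le_mul_of_nonneg_left hlb (by positivity)
    have HkN : (k : ℤ) * N ≤ p * N := mul_le_mul_of_nonneg_right hkp' hN0
    have Hkr : (k : ℤ) * r ≤ p * p := mul_le_mul hkp' hrp'.le hr0 hp'.le
    have HkN0 : (0 : ℤ) ≤ k * N := by positivity
    have Hkr0 : (0 : ℤ) ≤ k * r := by positivity
    have e1 : (p : ℤ) * ((cN : ℤ) + m * k + r) - k * ((N : ℤ) + m * p + r)
        = p * cN + p * r - k * N - k * r := by ring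
    have e2 : (p : ℤ) * ((cN : ℤ) + m * k) - k * ((N : ℤ) + m * p + r)
        = p * cN - k * N - k * r := by ring
    have Hpr : (p : ℤ) * r ≤ p * p := mul_le_mul_of_nonneg_left hrp'.le hp'.le
    have HpN : (0 : ℤ) ≤ p * N := by positivity
    have Hpp : (0 : ℤ) ≤ p * p := by positivity
    have HpcN : (0 : ℤ) ≤ p * cN := by positivity
    rw [abs_le, hfib2', hB]
    constructor
    · linarith
    · linarith
  -- the linear-recurrence sequence E
  set E : ℕ → ℤ := fun n => (p : ℤ) * Nat.fib (n + 1) - (k : ℤ) * Nat.fib (n + 2) with hE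
  have hErec : ∀ n, E (n + 2) = E (n + 1) + E n := by
    intro n
    have f1 : (Nat.fib (n + 3) : ℤ) = Nat.fib (n + 1) + Nat.fib (n + 2) := by
      exact_mod_cast Nat.fib_add_two (n := n + 1)
    have f2 : (Nat.fib (n + 4) : ℤ) = Nat.fib (n + 2) + Nat.fib (n + 3) := by
      exact_mod_cast Nat.fib_add_two (n := n + 2)
    simp only [hE]
    have e1 : n + 2 + 1 = n + 3 := rfl
    have e2 : n + 2 + 2 = n + 4 := rfl
    have e3 : n + 1 + 1 = n + 2 := rfl
    have e4 : n + 1 + 2 = n + 3 := rfl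
    rw [e1, e2, e3, e4, f2, f1]
    ring
  set a : ℤ := E N with ha
  set b : ℤ := E (N + 1) with hb
  have hid : ∀ m, E (N + m + 1) = (Nat.fib m : ℤ) * a + (Nat.fib (m + 1) : ℤ) * b := by
    intro m
    induction m using Nat.strong_induction_on with
    | _ m ih =>
      match m with
      | 0 => simp [hb]
      | 1 =>
        have := hErec N
        have e1 : N + 1 + 1 = N + 2 := rfl
        rw [e1] at this ⊢
        rw [this]
        simp only [Nat.fib_one, Nat.fib_two]
        push_cast
        ring
      | (j + 2) =>
        have i1 := ih (j + 1) (by omega)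
        have i2 := ih j (by omega)
        have hr := hErec (N + j + 1)
        have e1 : N + j + 1 + 2 = N + (j + 2) + 1 := by omega
        have e2 : N + j + 1 + 1 = N + (j + 1) + 1 := by omega
        rw [e1, e2] at hr
        rw [hr, i1, i2]
        have f1 : (Nat.fib (j + 2) : ℤ) = Nat.fib j + Nat.fib (j + 1) := by
          exact_mod_cast Nat.fib_add_two
        have f2 : (Nat.fib (j + 3) : ℤ) = Nat.fib (j + 1) + Nat.fib (j + 2) := by
          exact_mod_cast Nat.fib_add_two (n := j + 1)
        have e3 : j + 1 + 1 = j + 2 := rfl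
        have e4 : j + 2 + 1 = j + 3 := rfl
        rw [e3, e4, f2, f1]
        ring
  have hab : a ≠ 0 ∨ b ≠ 0 := by
    by_contra h
    push_neg at h
    obtain ⟨ha0, hb0⟩ := h
    have hdown : ∀ j, E (N - j) = 0 ∧ E (N - j + 1) = 0 := by
      intro j
      induction j with
      | zero => exact ⟨ha0, hb0⟩
      | succ j ih =>
        rcases le_or_gt (j + 1) N with h' | h'
        · have e1 : N - j = (N - (j + 1)) + 1 := by omega
          have e2 : N - j + 1 = (N - (j + 1)) + 2 := by omega
          have hr := hErec (N - (j + 1))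
          rw [← e1, ← e2] at hr
          have hE0 : E (N - (j + 1)) = 0 := by
            rw [ih.2, ih.1] at hr
            omega
          exact ⟨hE0, by rw [← e1] at *; exact ih.1⟩
        · have e : N - (j + 1) = N - j := by omega
          rw [e]; exact ih
    have h0 := (hdown N).1
    have h1 := (hdown N).2
    simp only [Nat.sub_self] at h0 h1
    have hv0 : E 0 = (p : ℤ) - k := by
      show (p : ℤ) * Nat.fib 1 - (k : ℤ) * Nat.fib 2 = (p : ℤ) - k
      norm_num
    have hv1 : E 1 = (p : ℤ) - 2 * k := by
      show (p : ℤ) * Nat.fib 2 - (k : ℤ) * Nat.fib 3 = (p : ℤ) - 2 * k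
      have : Nat.fib 3 = 2 := rfl
      rw [this]
      push_cast
      ring
    rw [hv0] at h0
    rw [hv1] at h1
    have hp' : (0 : ℤ) < p := by exact_mod_cast hp
    omega
  obtain ⟨m, hm⟩ := fib_grow (a.natAbs + b.natAbs) a b le_rfl hab B
  rw [← hid m] at hm
  exact absurd (hbound (N + m + 1) (by omega)) (not_le.mpr hm)
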